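/- Let F be the free group on two generators x and y, and let a, b be integers with |a| ≥ 2 and |b| ≥ 2. Then x^a · y^b is not a primitive element of F; that is, there is no basis of F containing x^a · y^b. -/

import Mathlib

/-- Group-theoretic core: if an automorphism of `F₂` sends a generator to `x^a y^b`,
then any two elements `u v` of any group with `u^a * v^b = 1` must commute. -/
private lemma aux_comm {G : Type} [Group G] (a b : ℤ) (u v : G)
    (huv : u ^ a * v ^ b = 1)
    (φ : FreeGroup Bool ≃* FreeGroup Bool)
    (hφ : φ (FreeGroup.of true) = (FreeGroup.of true) ^ a * (FreeGroup.of false) ^ b) :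
    u * v = v * u := by
  classical
  set ψ : FreeGroup Bool →* G := FreeGroup.lift (fun c => if c then u else v) with hψ
  set f : FreeGroup Bool →* G := ψ.comp φ.toMonoidHom with hf
  have hftrue : f (FreeGroup.of true) = 1 := by
    show ψ (φ (FreeGroup.of true)) = 1
    rw [hφ, _root_.map_mul, map_zpow, map_zpow, FreeGroup.lift_apply_of, FreeGroup.lift_apply_of]
    simpa using huv
  set h : G := f (FreeGroup.of false) with hh
  set j : FreeGroup Bool →* Subgroup.zpowers h :=
    FreeGroup.lift (fun c => if c then 1 else ⟨h, Subgroup.mem_zpowers h⟩) with hj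
  have hfj : f = (Subgroup.zpowers h).subtype.comp j := by
    apply FreeGroup.ext_hom
    intro c
    cases c <;>
      simp [hj, MonoidHom.comp_apply, FreeGroup.lift_apply_of, hftrue, ← hh]
  have hmem : ∀ g : FreeGroup Bool, f g ∈ Subgroup.zpowers h := by
    intro g
    rw [hfj]
    exact (j g).2
  have hcomp : ∀ z, f (φ.symm z) = ψ z := by
    intro z
    show ψ (φ (φ.symm z)) = ψ z
    rw [MulEquiv.apply_symm_apply]
  have hu : u ∈ Subgroup.zpowers h := by
    have := hmem (φ.symm (FreeGroup.of true))
    rwa [hcomp, hψ, FreeGroup.lift_apply_of, if_pos rfl] at this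
  have hv : v ∈ Subgroup.zpowers h := by
    have := hmem (φ.symm (FreeGroup.of false))
    rwa [hcomp, hψ, FreeGroup.lift_apply_of, if_neg (by simp)] at this
  obtain ⟨k, hk⟩ := Subgroup.mem_zpowers_iff.mp hu
  obtain ⟨l, hl⟩ := Subgroup.mem_zpowers_iff.mp hv
  rw [← hk, ← hl, ← _root_.zpow_add, ← _root_.zpow_add, add_comm]


/-- In the free group `F` on two generators, `x^a · y^b` with `|a| ≥ 2`, `|b| ≥ 2`
is not primitive: it is not the image of a generator under any automorphism of `F`
(equivalently, it belongs to no free basis of `F`). -/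
theorem stmt_14 (a b : ℤ) (ha : 2 ≤ |a|) (hb : 2 ≤ |b|) :
    ¬ ∃ φ : FreeGroup Bool ≃* FreeGroup Bool,
      φ (FreeGroup.of true) = (FreeGroup.of true) ^ a * (FreeGroup.of false) ^ b := by
  rintro ⟨φ, hφ⟩
  rw [Int.abs_eq_natAbs] at ha hb
  set n := a.natAbs with hn
  set m := b.natAbs with hm
  have hn2 : 2 ≤ n := by exact_mod_cast ha
  have hm2 : 2 ≤ m := by exact_mod_cast hb
  obtain ⟨ζ, hζ⟩ : ∃ ζ : ℂ, IsPrimitiveRoot ζ n :=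
    ⟨_, Complex.isPrimitiveRoot_exp n (by omega)⟩
  obtain ⟨ξ, hξ⟩ : ∃ ξ : ℂ, IsPrimitiveRoot ξ m :=
    ⟨_, Complex.isPrimitiveRoot_exp m (by omega)⟩
  have hζ1 : ζ ^ n = 1 := hζ.pow_eq_one
  have hξ1 : ξ ^ m = 1 := hξ.pow_eq_one
  have hζne1 : ζ ≠ 1 := hζ.ne_one (by omega)
  have hξne1 : ξ ≠ 1 := hξ.ne_one (by omega)
  have hζ0 : ζ ≠ 0 := by
    intro h; rw [h, zero_pow (by omega : n ≠ 0)] at hζ1; exact zero_ne_one hζ1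
  have hξ0 : ξ ≠ 0 := by
    intro h; rw [h, zero_pow (by omega : m ≠ 0)] at hξ1; exact zero_ne_one hξ1
  -- matrix power formulas
  have Mpow : ∀ k : ℕ, (!![ζ, 0; 0, 1] : Matrix (Fin 2) (Fin 2) ℂ) ^ k = !![ζ ^ k, 0; 0, 1] := by
    intro k
    induction k with
    | zero => simp [Matrix.one_fin_two]
    | succ k ih => rw [pow_succ, ih, Matrix.mul_fin_two]; ring_nf
  have Npow : ∀ k : ℕ, (!![ξ, 1 - ξ; 0, 1] : Matrix (Fin 2) (Fin 2) ℂ) ^ k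
      = !![ξ ^ k, 1 - ξ ^ k; 0, 1] := by
    intro k
    induction k with
    | zero => simp [Matrix.one_fin_two]
    | succ k ih => rw [pow_succ, ih, Matrix.mul_fin_two]; ring_nf
  -- units
  set M : (Matrix (Fin 2) (Fin 2) ℂ)ˣ :=
    ⟨!![ζ, 0; 0, 1], !![ζ⁻¹, 0; 0, 1],
      by rw [Matrix.mul_fin_two, Matrix.one_fin_two]; ext i j; fin_cases i <;> fin_cases j <;> simp [hζ0] <;> ring,
      by rw [Matrix.mul_fin_two, Matrix.one_fin_two]; ext i j; fin_cases i <;> fin_cases j <;> simp [hζ0] <;> ring⟩ with hM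
  set N : (Matrix (Fin 2) (Fin 2) ℂ)ˣ :=
    ⟨!![ξ, 1 - ξ; 0, 1], !![ξ⁻¹, 1 - ξ⁻¹; 0, 1],
      by rw [Matrix.mul_fin_two, Matrix.one_fin_two]; ext i j; fin_cases i <;> fin_cases j <;> simp [hξ0] <;> ring_nf <;> simp [hξ0],
      by rw [Matrix.mul_fin_two, Matrix.one_fin_two]; ext i j; fin_cases i <;> fin_cases j <;> simp [hξ0] <;> ring_nf <;> simp [hξ0]⟩ with hN
  have hMn : M ^ n = 1 := by
    refine Units.ext ?_
    rw [Units.val_pow_eq_pow_val]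
    show (!![ζ, 0; 0, 1] : Matrix (Fin 2) (Fin 2) ℂ) ^ n = 1
    rw [Mpow, hζ1, Matrix.one_fin_two]
  have hNm : N ^ m = 1 := by
    refine Units.ext ?_
    rw [Units.val_pow_eq_pow_val]
    show (!![ξ, 1 - ξ; 0, 1] : Matrix (Fin 2) (Fin 2) ℂ) ^ m = 1
    rw [Npow, hξ1, Matrix.one_fin_two]; ring_nf
  have hMa : M ^ a = 1 := by
    rcases Int.natAbs_eq a with h | h
    · rw [h, zpow_natCast, ← hn, hMn]
    · rw [h, _root_.zpow_neg, zpow_natCast, ← hn, hMn, inv_one]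
  have hNb : N ^ b = 1 := by
    rcases Int.natAbs_eq b with h | h
    · rw [h, zpow_natCast, ← hm, hNm]
    · rw [h, _root_.zpow_neg, zpow_natCast, ← hm, hNm, inv_one]
  have hcomm : M * N = N * M :=
    aux_comm a b M N (by rw [hMa, hNb, one_mul]) φ hφ
  have hcommval : (M.val * N.val) 0 1 = (N.val * M.val) 0 1 := by
    rw [← Units.val_mul, ← Units.val_mul, hcomm]
  rw [hM, hN] at hcommval
  simp only [Matrix.mul_fin_two] at hcommval
  have h01 : ζ * (1 - ξ) = 1 - ξ := by
    simpa using hcommval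
  have : (ζ - 1) * (1 - ξ) = 0 := by linear_combination h01
  rcases mul_eq_zero.mp this with h | h
  · exact hζne1 (by linear_combination h)
  · exact hξne1 (by linear_combination -h)
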